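/- Let d ≥ 1, let H ∈ M_d(ℂ), let J₁,…,J_N ∈ M_d(ℂ) be traceless matrices, let γ₁,…,γ_N be nonnegative real numbers, and let L be the associated elementary-basis Lindbladian matrix. Let P₁,…,P_m ∈ M_d(ℂ) be traceless Hermitian matrices and define the m×m complex matrix C by C_{jk} = Tr( L · (P_j ⊗ conj(P_k)) ). Then C is Hermitian positive semidefinite; indeed C = Σ_α γ_α v_α v_α† where v_α ∈ ℂ^m is the vector with entries (v_α)_j = Tr(P_j J_α). -/

import Mathlib

open scoped Matrix Kronecker ComplexOrder

/-- Entrywise complex conjugation of a matrix. -/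
def mconj {d : ℕ} (J : Matrix (Fin d) (Fin d) ℂ) : Matrix (Fin d) (Fin d) ℂ :=
  J.map (starRingEnd ℂ)

/-- The elementary-basis Lindbladian matrix
`L = i(I ⊗ Hᵀ − H ⊗ I) + ∑ α, γ_α [ J_α ⊗ conj(J_α) − ½( J_α† J_α ⊗ I + I ⊗ J_αᵀ conj(J_α) ) ]`. -/
noncomputable def lindbladMat {d N : ℕ} (H : Matrix (Fin d) (Fin d) ℂ)
    (J : Fin N → Matrix (Fin d) (Fin d) ℂ) (γ : Fin N → ℝ) :
    Matrix (Fin d × Fin d) (Fin d × Fin d) ℂ :=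
  Complex.I • ((1 : Matrix (Fin d) (Fin d) ℂ) ⊗ₖ Hᵀ - H ⊗ₖ (1 : Matrix (Fin d) (Fin d) ℂ)) +
    ∑ α, (γ α : ℂ) • ((J α) ⊗ₖ mconj (J α) -
      (1 / 2 : ℂ) • (((J α)ᴴ * J α) ⊗ₖ (1 : Matrix (Fin d) (Fin d) ℂ) +
        (1 : Matrix (Fin d) (Fin d) ℂ) ⊗ₖ ((J α)ᵀ * mconj (J α))))


lemma trace_mconj {d : ℕ} (A : Matrix (Fin d) (Fin d) ℂ) :
    (mconj A).trace = star A.trace := by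
  simp [mconj, Matrix.trace, Matrix.diag]

lemma mconj_mul {d : ℕ} (A B : Matrix (Fin d) (Fin d) ℂ) :
    mconj (A * B) = mconj A * mconj B := by
  simp [mconj, Matrix.map_mul]

lemma psd_vecMulVec {m : ℕ} (v : Fin m → ℂ) :
    (Matrix.vecMulVec v (star v)).PosSemidef := by
  rw [Matrix.vecMulVec_eq (Fin 1)]
  have : Matrix.replicateRow (Fin 1) (star v) = (Matrix.replicateCol (Fin 1) v)ᴴ := by
    ext i j; simp [Matrix.replicateRow, Matrix.replicateCol]
  rw [this]
  exact Matrix.posSemidef_self_mul_conjTranspose _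

lemma psd_smul {m : ℕ} {M : Matrix (Fin m) (Fin m) ℂ} (hM : M.PosSemidef)
    {c : ℝ} (hc : 0 ≤ c) : ((c : ℂ) • M).PosSemidef := by
  constructor
  · unfold Matrix.IsHermitian
    rw [Matrix.conjTranspose_smul, hM.1]
    congr 1
    simp
  · intro x
    have := hM.2 x
    have e : (x.sum fun i xi => x.sum fun j xj => star xi * ((c : ℂ) • M) i j * xj) =
        (c : ℂ) * (x.sum fun i xi => x.sum fun j xj => star xi * M i j * xj) := by
      simp only [Matrix.smul_apply, smul_eq_mul, Finsupp.sum, Finset.mul_sum]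
      exact Finset.sum_congr rfl fun _ _ => Finset.sum_congr rfl fun _ _ => by ring
    rw [e]
    exact mul_nonneg (by exact_mod_cast hc) this

/-- For nonnegative `γ_α`, traceless jump operators `J_α`, and traceless
Hermitian matrices `P₁,…,P_m`, the matrix `C` with `C_{jk} = Tr(L·(P_j ⊗ conj P_k))` is
Hermitian positive semidefinite; indeed `C = ∑ α, γ_α v_α v_α†` with `(v_α)_j = Tr(P_j J_α)`. -/
theorem stmt16 (d N m : ℕ) (hd : 1 ≤ d) (H : Matrix (Fin d) (Fin d) ℂ)
    (J : Fin N → Matrix (Fin d) (Fin d) ℂ) (γ : Fin N → ℝ)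
    (hγ : ∀ α, 0 ≤ γ α) (hJ : ∀ α, (J α).trace = 0)
    (P : Fin m → Matrix (Fin d) (Fin d) ℂ)
    (hPtr : ∀ j, (P j).trace = 0) (hPherm : ∀ j, (P j).IsHermitian) :
    (Matrix.of fun j k : Fin m =>
        (lindbladMat H J γ * (P j ⊗ₖ mconj (P k))).trace).PosSemidef ∧
    (Matrix.of fun j k : Fin m =>
        (lindbladMat H J γ * (P j ⊗ₖ mconj (P k))).trace) =
      ∑ α, (γ α : ℂ) •
        Matrix.vecMulVec (fun j => (P j * J α).trace) (star fun j => (P j * J α).trace) := by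
  have key : (Matrix.of fun j k : Fin m =>
      (lindbladMat H J γ * (P j ⊗ₖ mconj (P k))).trace) =
      ∑ α, (γ α : ℂ) • Matrix.vecMulVec (fun j => (P j * J α).trace)
        (star fun j => (P j * J α).trace) := by
    ext j k
    have hk : (mconj (P k)).trace = 0 := by rw [trace_mconj, hPtr k, star_zero]
    simp only [Matrix.of_apply, Matrix.sum_apply, Matrix.smul_apply, Matrix.vecMulVec_apply,
      Pi.star_apply, smul_eq_mul, lindbladMat]
    simp only [add_mul, smul_mul_assoc, sub_mul, Finset.sum_mul, ← Matrix.mul_kronecker_mul,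
      Matrix.one_mul, Matrix.mul_one, ← mconj_mul]
    simp only [Matrix.trace_add, Matrix.trace_sum, Matrix.trace_smul, Matrix.trace_sub,
      Matrix.trace_kronecker, trace_mconj, hPtr, hk, star_zero, mul_zero, zero_mul, sub_zero,
      zero_sub, neg_zero, add_zero, zero_add, smul_zero, sub_self, smul_eq_mul]
    refine Finset.sum_congr rfl fun α _ => ?_
    rw [Matrix.trace_mul_comm (J α) (P j), Matrix.trace_mul_comm (J α) (P k)]
  refine ⟨?_, key⟩
  rw [key]
  refine Finset.sum_induction _ Matrix.PosSemidef (fun a b ha hb => ha.add hb)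
    Matrix.PosSemidef.zero fun α _ => ?_
  exact psd_smul (psd_vecMulVec _) (hγ α)
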